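/- Let A be a finite set with at least two distinct elements, and let τ : A^ℤ → A^ℤ be a cellular automaton with a unique active transition p ∈ A^S, where S ⊂ ℤ is an integer interval with 0 ∈ S. Then τ ∘ τ ≠ τ if and only if τ is strictly almost equicontinuous (i.e., the set of equicontinuous points of τ is dense in A^ℤ, but not every point of A^ℤ is an equicontinuous point of τ). -/

import Mathlib

open Classical in
/-- The metric on the full shift `A^ℤ`: `d(x,y) = 0` if `x = y`, and otherwise
`d(x,y) = 2^{-max{k ≥ 0 : x|[-k,k] = y|[-k,k]}}`. -/
noncomputable def shiftDist {A : Type*} (x y : ℤ → A) : ℝ :=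
  if x = y then 0
  else (2 : ℝ) ^ (-((sSup {n : ℕ | ∀ i : ℤ, -(n : ℤ) ≤ i → i ≤ (n : ℤ) → x i = y i} : ℕ) : ℤ))

/-- `x` is an equicontinuous point of `τ`: for all `ε > 0` there is `k ∈ ℤ₊` such
that every `y` agreeing with `x` on `[-k,k]` satisfies `d(τⁿ(y), τⁿ(x)) < ε` for all
`n ≥ 0`. -/
def IsEquicontinuityPoint {A : Type*} (τ : (ℤ → A) → ℤ → A) (x : ℤ → A) : Prop :=
  ∀ ε : ℝ, 0 < ε → ∃ k : ℕ, 0 < k ∧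
    ∀ y : ℤ → A, (∀ i : ℤ, -(k : ℤ) ≤ i → i ≤ (k : ℤ) → y i = x i) →
      ∀ n : ℕ, shiftDist (τ^[n] y) (τ^[n] x) < ε

lemma CA_shiftDist_le {A : Type*} {u w : ℤ → A} (N : ℕ)
    (h : ∀ i : ℤ, -(N : ℤ) ≤ i → i ≤ (N : ℤ) → u i = w i) :
    shiftDist u w ≤ (2 : ℝ) ^ (-(N : ℤ)) := by
  unfold shiftDist
  split_ifs with he
  · positivity
  · obtain ⟨i0, hi0⟩ := Function.ne_iff.mp he
    have hbdd : BddAbove {n : ℕ | ∀ i : ℤ, -(n : ℤ) ≤ i → i ≤ (n : ℤ) → u i = w i} := by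
      refine ⟨i0.natAbs, fun n hn => ?_⟩
      by_contra hlt
      push_neg at hlt
      exact hi0 (hn i0 (by omega) (by omega))
    have hle : N ≤ sSup {n : ℕ | ∀ i : ℤ, -(n : ℤ) ≤ i → i ≤ (n : ℤ) → u i = w i} :=
      le_csSup hbdd h
    exact zpow_le_zpow_right₀ (by norm_num : (1:ℝ) ≤ 2) (by exact_mod_cast neg_le_neg (by exact_mod_cast hle))

lemma CA_shiftDist_eq_one {A : Type*} {u w : ℤ → A} (h : u 0 ≠ w 0) : shiftDist u w = 1 := by
  unfold shiftDist
  rw [if_neg (fun he => h (congrFun he 0))]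
  have hemp : {n : ℕ | ∀ i : ℤ, -(n : ℤ) ≤ i → i ≤ (n : ℤ) → u i = w i} = ∅ := by
    ext n
    simp only [Set.mem_setOf_eq, Set.mem_empty_iff_false, iff_false]
    intro hn
    exact h (hn 0 (by omega) (by omega))
  rw [hemp, csSup_empty]
  norm_num

lemma CA_exists_zpow_lt {ε : ℝ} (hε : 0 < ε) : ∃ N : ℕ, (2 : ℝ) ^ (-(N : ℤ)) < ε := by
  obtain ⟨N, hN⟩ := exists_pow_lt_of_lt_one hε (by norm_num : (1:ℝ)/2 < 1)
  refine ⟨N, ?_⟩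
  rw [zpow_neg, zpow_natCast]
  rwa [one_div, inv_pow] at hN

/-- `p` occurs in `x` at position `j` (pattern given by `P` on window `[k,ℓ]`). -/
def CAOcc {A : Type*} (P : ℤ → A) (k ℓ : ℤ) (x : ℤ → A) (j : ℤ) : Prop :=
  ∀ i, k ≤ i → i ≤ ℓ → x (i + j) = P i

section Basic

variable {A : Type*} {a b : A} {P : ℤ → A} {k ℓ : ℤ} {τ : (ℤ → A) → ℤ → A}

lemma CA_freeze (hP0 : P 0 = a) (hk : k ≤ 0) (hl : 0 ≤ ℓ)
    (hnb : ∀ x j, ¬ CAOcc P k ℓ x j → τ x j = x j)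
    (x : ℤ → A) (j : ℤ) (hx : x j ≠ a) : τ x j = x j := by
  apply hnb
  intro hoc
  apply hx
  have := hoc 0 hk hl
  rwa [zero_add, hP0] at this

lemma CA_step_local
    (hob : ∀ x j, CAOcc P k ℓ x j → τ x j = b)
    (hnb : ∀ x j, ¬ CAOcc P k ℓ x j → τ x j = x j)
    (x y : ℤ → A) (j : ℤ) (h : ∀ i, k ≤ i → i ≤ ℓ → y (i + j) = x (i + j)) (h0 : y j = x j) :
    τ y j = τ x j := by
  have hiff : CAOcc P k ℓ y j ↔ CAOcc P k ℓ x j := by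
    constructor <;> intro hc i h1 h2
    · rw [← h i h1 h2]; exact hc i h1 h2
    · rw [h i h1 h2]; exact hc i h1 h2
  by_cases hoc : CAOcc P k ℓ x j
  · rw [hob _ _ (hiff.mpr hoc), hob _ _ hoc]
  · rw [hnb _ _ (fun hh => hoc (hiff.mp hh)), hnb _ _ hoc, h0]

lemma CA_tau_shift
    (hob : ∀ x j, CAOcc P k ℓ x j → τ x j = b)
    (hnb : ∀ x j, ¬ CAOcc P k ℓ x j → τ x j = x j)
    (r : ℤ) (x : ℤ → A) :
    τ (fun i => x (i + r)) = fun i => τ x (i + r) := by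
  funext j
  have hiff : CAOcc P k ℓ (fun i => x (i + r)) j ↔ CAOcc P k ℓ x (j + r) := by
    constructor <;> intro hc i h1 h2 <;> have := hc i h1 h2
    · simp only [] at this; rwa [add_assoc] at this
    · show x (i + j + r) = P i
      rwa [add_assoc]
  by_cases hoc : CAOcc P k ℓ x (j + r)
  · rw [hob _ _ (hiff.mpr hoc)]; exact (hob _ _ hoc).symm
  · rw [hnb _ _ (fun hh => hoc (hiff.mp hh))]; exact (hnb _ _ hoc).symm

lemma CA_iter_shift
    (hob : ∀ x j, CAOcc P k ℓ x j → τ x j = b)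
    (hnb : ∀ x j, ¬ CAOcc P k ℓ x j → τ x j = x j)
    (n : ℕ) (r : ℤ) (x : ℤ → A) :
    τ^[n] (fun i => x (i + r)) = fun i => (τ^[n] x) (i + r) := by
  induction n generalizing x with
  | zero => rfl
  | succ n ih =>
    rw [Function.iterate_succ_apply, Function.iterate_succ_apply,
      CA_tau_shift hob hnb r x, ih (τ x)]

/-- If `τ∘τ = τ` then every point is an equicontinuity point. -/
lemma CA_all_eq_of_idem (hk : k ≤ 0) (hl : 0 ≤ ℓ)
    (hob : ∀ x j, CAOcc P k ℓ x j → τ x j = b)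
    (hnb : ∀ x j, ¬ CAOcc P k ℓ x j → τ x j = x j)
    (hidem : τ ∘ τ = τ) : ∀ x : ℤ → A, IsEquicontinuityPoint τ x := by
  have hit : ∀ m : ℕ, τ^[m + 1] = τ := by
    intro m
    induction m with
    | zero => exact Function.iterate_one τ
    | succ m ih =>
      rw [Function.iterate_succ', ih]
      exact hidem
  intro x ε hε
  obtain ⟨N, hN⟩ := CA_exists_zpow_lt hε
  set K : ℕ := N + (ℓ - k).toNat + 1 with hK
  refine ⟨K, by omega, ?_⟩
  intro y hy n
  have hagree : ∀ i : ℤ, -(N : ℤ) ≤ i → i ≤ (N : ℤ) → (τ^[n] y) i = (τ^[n] x) i := by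
    intro i h1 h2
    have hKl : (ℓ : ℤ) ≤ (K : ℤ) - N := by
      have : (0:ℤ) ≤ ℓ - k := by omega
      have ht : ((ℓ - k).toNat : ℤ) = ℓ - k := Int.toNat_of_nonneg this
      push_cast [hK]
      omega
    have hKk : -((K : ℤ) - N) ≤ k := by
      have : (0:ℤ) ≤ ℓ - k := by omega
      have ht : ((ℓ - k).toNat : ℤ) = ℓ - k := Int.toNat_of_nonneg this
      push_cast [hK]
      omega
    match n with
    | 0 => exact hy i (by omega) (by omega)
    | Nat.succ m =>
      rw [hit m]
      apply CA_step_local hob hnb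
      · intro i' hi1 hi2
        apply hy <;> omega
      · apply hy <;> omega
  calc shiftDist (τ^[n] y) (τ^[n] x) ≤ (2:ℝ) ^ (-(N:ℤ)) := CA_shiftDist_le N hagree
    _ < ε := hN

end Basic

section Shield

variable {A : Type*} {a b : A} {P : ℤ → A} {k ℓ : ℤ} {τ : (ℤ → A) → ℤ → A}

/-- Blocks of non-`a` cells shield a region from outside influence. -/
lemma CA_shield (hk : k ≤ 0) (hl : 0 ≤ ℓ) (hP0 : P 0 = a)
    (hob : ∀ x j, CAOcc P k ℓ x j → τ x j = b)
    (hnb : ∀ x j, ¬ CAOcc P k ℓ x j → τ x j = x j)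
    (A1 A2 : ℤ) (hA : A1 ≤ A2) (z z' : ℤ → A)
    (hag : ∀ i, A1 ≤ i → i ≤ A2 + (ℓ - k) → z i = z' i)
    (hb1 : ∀ i, A1 ≤ i → i ≤ A1 + (ℓ - k) → z i ≠ a)
    (hb2 : ∀ i, A2 ≤ i → i ≤ A2 + (ℓ - k) → z i ≠ a) :
    ∀ n, (∀ i, A1 ≤ i → i ≤ A2 + (ℓ - k) → (τ^[n] z) i = (τ^[n] z') i)
      ∧ (∀ i, (A1 ≤ i ∧ i ≤ A1 + (ℓ - k)) ∨ (A2 ≤ i ∧ i ≤ A2 + (ℓ - k)) →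
          (τ^[n] z) i ≠ a) := by
  intro n
  induction n with
  | zero =>
    refine ⟨hag, ?_⟩
    rintro i (⟨h1, h2⟩ | ⟨h1, h2⟩)
    exacts [hb1 i h1 h2, hb2 i h1 h2]
  | succ n ih =>
    obtain ⟨ihag, ihb⟩ := ih
    have hfz : ∀ i, (A1 ≤ i ∧ i ≤ A1 + (ℓ - k)) ∨ (A2 ≤ i ∧ i ≤ A2 + (ℓ - k)) →
        (τ^[n+1] z) i = (τ^[n] z) i ∧ (τ^[n+1] z') i = (τ^[n] z') i := by
      intro i hblk
      have h1 : (τ^[n] z) i ≠ a := ihb i hblk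
      have hiR1 : A1 ≤ i := by rcases hblk with ⟨h, _⟩ | ⟨h, _⟩ <;> omega
      have hiR2 : i ≤ A2 + (ℓ - k) := by rcases hblk with ⟨_, h⟩ | ⟨_, h⟩ <;> omega
      have h2 : (τ^[n] z') i ≠ a := by
        rw [← ihag i hiR1 hiR2]; exact h1
      constructor
      · rw [Function.iterate_succ_apply']
        exact CA_freeze hP0 hk hl hnb _ i h1
      · rw [Function.iterate_succ_apply']
        exact CA_freeze hP0 hk hl hnb _ i h2
    constructor
    · intro i hi1 hi2
      by_cases hmid : A1 + (ℓ - k) < i ∧ i < A2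
      · rw [Function.iterate_succ_apply', Function.iterate_succ_apply']
        apply CA_step_local hob hnb
        · intro i' h1' h2'
          apply ihag <;> omega
        · apply ihag <;> omega
      · have hblk : (A1 ≤ i ∧ i ≤ A1 + (ℓ - k)) ∨ (A2 ≤ i ∧ i ≤ A2 + (ℓ - k)) := by omega
        obtain ⟨e1, e2⟩ := hfz i hblk
        rw [e1, e2]
        exact ihag i hi1 hi2
    · intro i hblk
      rw [(hfz i hblk).1]
      exact ihb i hblk

/-- Equicontinuity points are dense (unconditionally). -/
lemma CA_dense (hk : k ≤ 0) (hl : 0 ≤ ℓ) (hP0 : P 0 = a)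
    (hob : ∀ x j, CAOcc P k ℓ x j → τ x j = b)
    (hnb : ∀ x j, ¬ CAOcc P k ℓ x j → τ x j = x j)
    (c : A) (hca : c ≠ a) :
    ∀ x : ℤ → A, ∀ ε : ℝ, 0 < ε →
      ∃ y : ℤ → A, IsEquicontinuityPoint τ y ∧ shiftDist x y < ε := by
  intro x ε hε
  obtain ⟨N, hN⟩ := CA_exists_zpow_lt hε
  set y : ℤ → A := fun i => if -(N : ℤ) ≤ i ∧ i ≤ (N : ℤ) then x i else c with hy
  have hyx : ∀ i : ℤ, -(N : ℤ) ≤ i → i ≤ (N : ℤ) → x i = y i := by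
    intro i h1 h2
    simp only [hy, if_pos (⟨h1, h2⟩ : -(N:ℤ) ≤ i ∧ i ≤ (N:ℤ))]
  have hyc : ∀ i : ℤ, (¬ (-(N : ℤ) ≤ i ∧ i ≤ (N : ℤ))) → y i = c := by
    intro i h
    simp only [hy, if_neg h]
  refine ⟨y, ?_, lt_of_le_of_lt (CA_shiftDist_le N hyx) hN⟩
  intro ε' hε'
  obtain ⟨N', hN'⟩ := CA_exists_zpow_lt hε'
  set Nb : ℕ := max N N' with hNb
  set D : ℤ := ℓ - k with hD
  have hD0 : 0 ≤ D := by omega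
  set A1 : ℤ := -((Nb : ℤ) + 1) - D with hA1
  set A2 : ℤ := (Nb : ℤ) + 1 with hA2
  set κ : ℕ := Nb + 1 + D.toNat with hκ
  have hDt : (D.toNat : ℤ) = D := Int.toNat_of_nonneg hD0
  refine ⟨κ, by omega, ?_⟩
  intro y' hy' n
  have hsh := CA_shield hk hl hP0 hob hnb A1 A2 (by omega) y' y
    (fun i h1 h2 => by
      apply hy' <;> push_cast [hκ] <;> omega)
    (fun i h1 h2 => by
      rw [hy' i (by push_cast [hκ]; omega) (by push_cast [hκ]; omega)]
      rw [hyc i (by omega)]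
      exact hca)
    (fun i h1 h2 => by
      rw [hy' i (by push_cast [hκ]; omega) (by push_cast [hκ]; omega)]
      rw [hyc i (by omega)]
      exact hca)
  have hagree := (hsh n).1
  calc shiftDist (τ^[n] y') (τ^[n] y) ≤ (2:ℝ) ^ (-(N' : ℤ)) :=
        CA_shiftDist_le N' (fun i h1 h2 => hagree i (by omega) (by omega))
    _ < ε' := hN'

end Shield

section Contra

variable {A : Type*} {a b : A} {P : ℤ → A} {k ℓ : ℤ}

/-- Two occurrence positions whose difference lies in the window lead to a
contradiction (the pattern would be periodic in a way incompatible with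
`P 0 = a`, `P t = b`). -/
lemma CA_contra (hba : b ≠ a) (hk : k ≤ 0) (hl : 0 ≤ ℓ) (hP0 : P 0 = a)
    (d t base : ℤ) (hd : 0 < d) (htk : k ≤ t) (htl : t ≤ ℓ) (hPt : P t = b)
    (hper : ∀ i, k ≤ i → i + d ≤ ℓ → P i = P (i + d))
    (hbase : ∀ r, 0 ≤ r → r < d →
      (k ≤ base + r ∧ base + r ≤ ℓ) ∧ (k ≤ base + r + t ∧ base + r + t ≤ ℓ))
    (hbrk : ∀ j, k ≤ j → j ≤ ℓ → k ≤ j + t → j + t ≤ ℓ → (P j = P (j + t) ∨ P j = a)) :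
    False := by
  -- chains of d-steps inside the window
  have hchain : ∀ (n : ℕ) (j : ℤ), k ≤ j → j + (n : ℤ) * d ≤ ℓ → P j = P (j + (n : ℤ) * d) := by
    intro n
    induction n with
    | zero => intro j _ _; simp
    | succ n ih =>
      intro j h1 h2
      have hnd : (0:ℤ) ≤ (n : ℤ) * d := by positivity
      have hc : ((n : ℤ) + 1) * d = (n : ℤ) * d + d := by ring
      push_cast at h2 ⊢
      rw [hc] at h2 ⊢
      have h2' : j + (n : ℤ) * d ≤ ℓ := by omega
      rw [ih j h1 h2']
      have := hper (j + (n : ℤ) * d) (by omega) (by omega)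
      rw [this]
      ring_nf
  set R : ℤ → A := fun c => P (base + (c - base) % d) with hR
  have hmod : ∀ c : ℤ, 0 ≤ (c - base) % d ∧ (c - base) % d < d :=
    fun c => ⟨Int.emod_nonneg _ (by omega), Int.emod_lt_of_pos _ hd⟩
  have hdiv : ∀ c : ℤ, d * ((c - base) / d) + (c - base) % d = c - base :=
    fun c => Int.mul_ediv_add_emod _ _
  have hPR : ∀ c, k ≤ c → c ≤ ℓ → P c = R c := by
    intro c h1 h2
    obtain ⟨hr0, hrd⟩ := hmod c
    obtain ⟨hS1, _⟩ := hbase _ hr0 hrd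
    have hcq := hdiv c
    set q := (c - base) / d with hqdef
    rcases le_or_gt 0 q with hq0 | hq0
    · have hb2 : base + (c - base) % d + (q.toNat : ℤ) * d = c := by
        rw [Int.toNat_of_nonneg hq0]
        have : q * d = d * q := mul_comm _ _
        omega
      have := hchain q.toNat (base + (c - base) % d) hS1.1 (by rw [hb2]; exact h2)
      rw [hb2] at this
      rw [hR]
      exact this.symm
    · have hb2 : c + ((-q).toNat : ℤ) * d = base + (c - base) % d := by
        rw [Int.toNat_of_nonneg (by omega : (0:ℤ) ≤ -q)]
        have : q * d = d * q := mul_comm _ _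
        have h' : (-q) * d = -(q * d) := by ring
        omega
      have := hchain (-q).toNat c h1 (by rw [hb2]; exact hS1.2)
      rw [hb2] at this
      exact this
  have hRmod : ∀ c c' : ℤ, d ∣ (c - c') → R c = R c' := by
    intro c c' hdvd
    obtain ⟨e, he⟩ := hdvd
    have heq : (c - base) % d = (c' - base) % d := by
      have h1 : c - base = (c' - base) + d * e := by omega
      rw [h1, Int.add_mul_emod_self_left]
    simp only [hR, heq]
  have hstep : ∀ c, R c = b → R c = R (c + t) := by
    intro c hc
    obtain ⟨hr0, hrd⟩ := hmod c
    obtain ⟨hS1, hS2⟩ := hbase _ hr0 hrd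
    have h2 := hbrk (base + (c - base) % d) hS1.1 hS1.2 hS2.1 hS2.2
    rcases h2 with h2 | h2
    · have e1 : R c = P (base + (c - base) % d + t) := by rw [hR]; exact h2
      have e2 : P (base + (c - base) % d + t) = R (base + (c - base) % d + t) :=
        hPR _ hS2.1 hS2.2
      have e3 : R (base + (c - base) % d + t) = R (c + t) := by
        apply hRmod
        refine ⟨-((c - base) / d), ?_⟩
        have := hdiv c
        have hmn : d * -((c - base) / d) = -(d * ((c - base) / d)) := by ring
        omega
      rw [e1, e2, e3]
    · exfalso
      apply hba
      rw [← hc, hR]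
      simpa using h2
  have hRt : R t = b := by rw [← hPR t htk htl]; exact hPt
  have hR0 : R 0 = a := by rw [← hPR 0 hk hl]; exact hP0
  have hbch : ∀ n : ℕ, R (((n : ℤ) + 1) * t) = b := by
    intro n
    induction n with
    | zero => simpa using hRt
    | succ n ih =>
      have hst := hstep _ ih
      have : R (((n : ℤ) + 1) * t + t) = b := by rw [← hst]; exact ih
      have harg : ((((n : ℕ) + 1 : ℕ) : ℤ) + 1) * t = ((n : ℤ) + 1) * t + t := by
        push_cast; ring
      rw [harg]
      exact this
  have h1 := hbch (d.toNat - 1)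
  have htn : ((d.toNat : ℤ)) = d := Int.toNat_of_nonneg hd.le
  have harg : (((d.toNat - 1 : ℕ) : ℤ) + 1) * t = d * t := by
    have hd1 : 1 ≤ d.toNat := by omega
    push_cast [hd1]
    rw [htn]
    ring
  rw [harg] at h1
  have h3 : R (d * t) = R 0 := hRmod _ _ ⟨t, by ring⟩
  rw [h3, hR0] at h1
  exact hba h1.symm
end Contra

section Extract

variable {A : Type*} {a b : A} {P : ℤ → A} {k ℓ : ℤ} {τ : (ℤ → A) → ℤ → A}

/-- From a configuration whose image under `τ` shows the pattern at the origin,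
extract `s ≠ 0` in the window with `P s = b` such that `P` is `s`-quasi-periodic
on the window away from `0`. -/
lemma CA_extract (hba : b ≠ a) (hk : k ≤ 0) (hl : 0 ≤ ℓ) (hP0 : P 0 = a)
    (hob : ∀ x j, CAOcc P k ℓ x j → τ x j = b)
    (hnb : ∀ x j, ¬ CAOcc P k ℓ x j → τ x j = x j)
    (z : ℤ → A) (hz : ∀ i, k ≤ i → i ≤ ℓ → τ z i = P i) :
    ∃ s, (k ≤ s ∧ s ≤ ℓ) ∧ s ≠ 0 ∧ P s = b ∧
      ∀ j, k ≤ j → j ≤ ℓ → k ≤ j + s → j + s ≤ ℓ → j ≠ 0 → P j = P (j + s) := by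
  have hno0 : ¬ CAOcc P k ℓ z 0 := by
    intro h
    have h1 := hob z 0 h
    have h2 := hz 0 hk hl
    rw [h1, hP0] at h2
    exact hba h2
  have hocc_at : ∀ s, k ≤ s → s ≤ ℓ → CAOcc P k ℓ z s → P s = b ∧ s ≠ 0 := by
    intro s h1 h2 hoc
    refine ⟨?_, ?_⟩
    · rw [← hz s h1 h2]
      exact hob z s hoc
    · rintro rfl; exact hno0 hoc
  have hzval : ∀ i, k ≤ i → i ≤ ℓ → ¬ CAOcc P k ℓ z i → z i = P i := by
    intro i h1 h2 hno
    rw [← hz i h1 h2, hnb z i hno]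
  have hzvala : ∀ i, CAOcc P k ℓ z i → z i = a := by
    intro i hoc
    have := hoc 0 hk hl
    rwa [zero_add, hP0] at this
  have hT : ∃ s, (k ≤ s ∧ s ≤ ℓ) ∧ CAOcc P k ℓ z s := by
    by_contra hn
    push_neg at hn
    apply hno0
    intro i h1 h2
    rw [add_zero]
    exact hzval i h1 h2 (hn i ⟨h1, h2⟩)
  obtain ⟨s, hsb, hsoc⟩ := hT
  obtain ⟨hPs, hs0⟩ := hocc_at s hsb.1 hsb.2 hsoc
  -- quasi-periodicity with breaks only at occurrences, and full periodicity for pairs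
  have hbrk_any : ∀ tt, CAOcc P k ℓ z tt → ∀ jj, k ≤ jj → jj ≤ ℓ → k ≤ jj + tt → jj + tt ≤ ℓ →
      (P jj = P (jj + tt) ∨ P jj = a) := by
    intro tt htt jj h1 h2 h3 h4
    have e1 : z (jj + tt) = P jj := htt jj h1 h2
    by_cases hoc2 : CAOcc P k ℓ z (jj + tt)
    · right
      rw [← e1]
      exact hzvala _ hoc2
    · left
      rw [← e1, hzval (jj + tt) h3 h4 hoc2]
  have hperiod : ∀ t t' : ℤ, CAOcc P k ℓ z t → CAOcc P k ℓ z t' →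
      ∀ i, k ≤ i → i ≤ ℓ → k ≤ i + (t' - t) → i + (t' - t) ≤ ℓ →
      P i = P (i + (t' - t)) := by
    intro t t' ht ht' i h1 h2 h3 h4
    have e1 : z (i + t') = P i := ht' i h1 h2
    have e2 : z ((i + (t' - t)) + t) = P (i + (t' - t)) := ht (i + (t' - t)) h3 h4
    have : (i + (t' - t)) + t = i + t' := by ring
    rw [this] at e2
    rw [← e1, e2]
  refine ⟨s, hsb, hs0, hPs, ?_⟩
  intro j hj1 hj2 hj3 hj4 hj0
  by_cases hoc2 : CAOcc P k ℓ z (j + s)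
  · -- two occurrences with difference in the window: contradiction
    exfalso
    set t2 : ℤ := j + s with ht2def
    obtain ⟨hPt2, ht20⟩ := hocc_at t2 hj3 hj4 hoc2
    have hne : s ≠ t2 := by omega
    rcases lt_or_gt_of_ne hne with hlt | hgt
    · -- s < t2, d := t2 - s = j, and j ∈ [k,ℓ] so d ≤ ℓ
      set d : ℤ := t2 - s with hddef
      have hd : 0 < d := by omega
      have hper_d : ∀ i, k ≤ i → i + d ≤ ℓ → P i = P (i + d) := by
        intro i h1 h2
        exact hperiod s t2 hsoc hoc2 i h1 (by omega) (by omega) (by omega)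
      rcases lt_trichotomy s 0 with hsneg | hszero | hspos
      · rcases lt_trichotomy t2 0 with ht2neg | ht2zero | ht2pos
        · -- both negative: t := t2 (max), base := k - t2
          exact CA_contra hba hk hl hP0 d t2 (k - t2) hd hj3 hj4 hPt2 hper_d
            (fun r hr1 hr2 => by constructor <;> constructor <;> omega)
            (hbrk_any t2 hoc2)
        · exact ht20 ht2zero
        · -- mixed s < 0 < t2, d = j ≤ ℓ: t := s, base := 1
          exact CA_contra hba hk hl hP0 d s 1 hd hsb.1 hsb.2 hPs hper_d
            (fun r hr1 hr2 => by constructor <;> constructor <;> omega)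
            (hbrk_any s hsoc)
      · exact hs0 hszero
      · -- both positive: t := s (min), base := 0
        exact CA_contra hba hk hl hP0 d s 0 hd hsb.1 hsb.2 hPs hper_d
          (fun r hr1 hr2 => by constructor <;> constructor <;> omega)
          (hbrk_any s hsoc)
    · -- t2 < s, d := s - t2 = -j, and j ∈ [k,ℓ] so d ≤ -k
      set d : ℤ := s - t2 with hddef
      have hd : 0 < d := by omega
      have hper_d : ∀ i, k ≤ i → i + d ≤ ℓ → P i = P (i + d) := by
        intro i h1 h2
        exact hperiod t2 s hoc2 hsoc i h1 (by omega) (by omega) (by omega)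
      rcases lt_trichotomy t2 0 with ht2neg | ht2zero | ht2pos
      · rcases lt_trichotomy s 0 with hsneg | hszero | hspos
        · -- both negative: t := s (max), base := k - s
          exact CA_contra hba hk hl hP0 d s (k - s) hd hsb.1 hsb.2 hPs hper_d
            (fun r hr1 hr2 => by constructor <;> constructor <;> omega)
            (hbrk_any s hsoc)
        · exact hs0 hszero
        · -- mixed t2 < 0 < s, -d = j ≥ k: t := s, base := -d
          exact CA_contra hba hk hl hP0 d s (-d) hd hsb.1 hsb.2 hPs hper_d
            (fun r hr1 hr2 => by constructor <;> constructor <;> omega)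
            (hbrk_any s hsoc)
      · exact ht20 ht2zero
      · -- both positive: t := t2 (min), base := 0
        exact CA_contra hba hk hl hP0 d t2 0 hd hj3 hj4 hPt2 hper_d
          (fun r hr1 hr2 => by constructor <;> constructor <;> omega)
          (hbrk_any t2 hoc2)
  · have e1 : z (j + s) = P j := hsoc j hj1 hj2
    rw [← e1, hzval (j + s) hj3 hj4 hoc2]

end Extract

section Core

open Classical

variable {A : Type*} {a b : A} {P : ℤ → A} {k ℓ : ℤ} {τ : (ℤ → A) → ℤ → A}

/-- The travelling-wave construction: for `s > 0` in the window with `P s = b` and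
`P` `s`-quasi-periodic away from `0`, there is a non-equicontinuity point. -/
lemma CA_core_pos (hba : b ≠ a) (hk : k ≤ 0) (hl : 0 ≤ ℓ) (hP0 : P 0 = a)
    (hob : ∀ x j, CAOcc P k ℓ x j → τ x j = b)
    (hnb : ∀ x j, ¬ CAOcc P k ℓ x j → τ x j = x j)
    (s : ℤ) (hs : 0 < s) (hsl : s ≤ ℓ) (hPs : P s = b)
    (hwave : ∀ j, k ≤ j → j ≤ ℓ → k ≤ j + s → j + s ≤ ℓ → j ≠ 0 → P j = P (j + s)) :
    ∃ x : ℤ → A, ¬ IsEquicontinuityPoint τ x := by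
  have hks : k ≤ s := le_trans hk hs.le
  -- chains of s-steps avoiding 0
  have hUP : ∀ (n : ℕ) (j : ℤ), k ≤ j → j + (n : ℤ) * s ≤ ℓ →
      (∀ m : ℕ, (m : ℤ) < (n : ℤ) → j + (m : ℤ) * s ≠ 0) → P j = P (j + (n : ℤ) * s) := by
    intro n
    induction n with
    | zero => intro j _ _ _; simp
    | succ n ih =>
      intro j h1 h2 h3
      have hns : (0:ℤ) ≤ (n : ℤ) * s := by positivity
      have hc : ((n : ℤ) + 1) * s = (n : ℤ) * s + s := by ring
      push_cast at h2 ⊢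
      rw [hc] at h2 ⊢
      have h2' : j + (n : ℤ) * s ≤ ℓ := by omega
      have ihh := ih j h1 h2' (fun m hm => h3 m (by push_cast; omega))
      rw [ihh]
      have hw := hwave (j + (n:ℤ)*s) (by omega) (by omega) (by omega) (by omega)
        (h3 n (by push_cast; omega))
      rw [hw]
      congr 1
      ring
  have hmod : ∀ i : ℤ, 0 ≤ i % s ∧ i % s < s :=
    fun i => ⟨Int.emod_nonneg _ (by omega), Int.emod_lt_of_pos _ hs⟩
  have hdiv : ∀ i : ℤ, s * (i / s) + i % s = i := fun i => Int.mul_ediv_add_emod _ _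
  have hdvd_mod : ∀ i : ℤ, s ∣ i → i % s = 0 := fun i h => Int.emod_eq_zero_of_dvd h
  have hmod_dvd : ∀ i : ℤ, i % s = 0 → s ∣ i := fun i h => Int.dvd_of_emod_eq_zero h
  -- values of P on the window, from the quasi-periodic structure
  have hA1 : ∀ i, k ≤ i → i ≤ ℓ → ¬ s ∣ i → P i = P (i % s) := by
    intro i h1 h2 hnd
    obtain ⟨hr0, hrs⟩ := hmod i
    have hrne : i % s ≠ 0 := fun h => hnd (hmod_dvd i h)
    have hcq := hdiv i
    set q := i / s with hq
    rcases le_or_gt 0 q with hq0 | hq0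
    · have hb2 : i % s + (q.toNat : ℤ) * s = i := by
        rw [Int.toNat_of_nonneg hq0]
        have : q * s = s * q := mul_comm _ _
        omega
      have := hUP q.toNat (i % s) (by omega) (by rw [hb2]; exact h2)
        (fun m hm => by
          rcases Nat.eq_zero_or_pos m with rfl | hmpos
          · simpa using hrne
          · have hms : s ≤ (m : ℤ) * s := le_mul_of_one_le_left hs.le (by exact_mod_cast hmpos)
            omega)
      rw [hb2] at this
      exact this.symm
    · have hb2 : i + ((-q).toNat : ℤ) * s = i % s := by
        rw [Int.toNat_of_nonneg (by omega : (0:ℤ) ≤ -q)]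
        have h' : (-q) * s = -(s * q) := by ring
        omega
      have := hUP (-q).toNat i h1 (by rw [hb2]; omega)
        (fun m hm => by
          intro hzero
          -- i = -(m*s) is a multiple of s
          apply hnd
          refine ⟨-(m : ℤ), ?_⟩
          have h1' : (m:ℤ) * s = s * (m:ℤ) := mul_comm _ _
          have h2' : s * -(m:ℤ) = -(s * (m:ℤ)) := by ring
          omega)
      rw [hb2] at this
      exact this
  have hA2a : ∀ i, k ≤ i → i ≤ 0 → s ∣ i → P i = a := by
    intro i h1 h2 hdv
    obtain ⟨q, hq⟩ := hdv
    have hq0 : q ≤ 0 := by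
      by_contra hq0
      push_neg at hq0
      nlinarith
    have hb2 : i + ((-q).toNat : ℤ) * s = 0 := by
      rw [Int.toNat_of_nonneg (by omega : (0:ℤ) ≤ -q)]
      have h' : (-q) * s = -(s * q) := by ring
      omega
    have := hUP (-q).toNat i h1 (by rw [hb2]; omega)
      (fun m hm hzero => by
        have h1' : (m:ℤ) * s = s * (m:ℤ) := mul_comm _ _
        have h2'' : i = s * q := hq
        have h2' : s * q + s * (m:ℤ) = 0 := by omega
        have h3' : s * (q + (m:ℤ)) = 0 := by
          have he : s * (q + (m:ℤ)) = s * q + s * (m:ℤ) := by ring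
          rw [he]; exact h2'
        have h4' : q + (m:ℤ) = 0 := by
          rcases mul_eq_zero.mp h3' with h | h
          · omega
          · exact h
        have h5' : ((-q).toNat : ℤ) = -q := Int.toNat_of_nonneg (by omega)
        omega)
    rw [hb2] at this
    rw [this, hP0]
  have hA2b : ∀ i, 0 < i → i ≤ ℓ → s ∣ i → P i = b := by
    intro i h1 h2 hdv
    obtain ⟨q, hq⟩ := hdv
    have hq1 : 1 ≤ q := by
      by_contra hq1
      push_neg at hq1
      have : q ≤ 0 := by omega
      nlinarith
    have hb2 : s + ((q - 1).toNat : ℤ) * s = i := by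
      rw [Int.toNat_of_nonneg (by omega : (0:ℤ) ≤ q - 1)]
      have h' : (q - 1) * s = s * q - s := by ring
      omega
    have := hUP (q - 1).toNat s hks (by rw [hb2]; exact h2)
      (fun m hm hzero => by
        have hms : (0:ℤ) ≤ (m : ℤ) * s := by positivity
        omega)
    rw [hb2] at this
    rw [← this, hPs]
  -- the wave and the fuel configurations
  set v : ℤ → A := fun i => if s ∣ i then (if i ≤ 0 then a else b) else P (i % s) with hv
  set x : ℤ → A := fun i => P (i % s) with hx
  have hmod_add : ∀ c : ℤ, (c + s) % s = c % s := by
    intro c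
    have := Int.add_mul_emod_self_left (a := c) (b := s) (c := 1)
    simpa using this
  have hx0 : x 0 = a := by
    simp only [hx, Int.zero_emod, hP0]
  have hvs : v s = b := by
    simp only [hv, if_pos (dvd_refl s)]
    rw [if_neg (by omega)]
  have hocc_v0 : CAOcc P k ℓ v 0 := by
    intro i h1 h2
    rw [add_zero]
    by_cases hdv : s ∣ i
    · simp only [hv, if_pos hdv]
      rcases le_or_gt i 0 with hi0 | hi0
      · rw [if_pos hi0, hA2a i h1 hi0 hdv]
      · rw [if_neg (by omega), hA2b i hi0 h2 hdv]
    · simp only [hv, if_neg hdv]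
      exact (hA1 i h1 h2 hdv).symm
  have hv_shift : τ v = fun c => v (c + s) := by
    funext c
    by_cases hoc : CAOcc P k ℓ v c
    · have hvc : v c = a := by
        have := hoc 0 hk hl
        rwa [zero_add, hP0] at this
      have hvcs : v (s + c) = b := by
        have := hoc s hks hsl
        rwa [hPs] at this
      have hc0 : c = 0 := by
        by_cases hdv : s ∣ c
        · have hc1 : c ≤ 0 := by
            by_contra hcpos
            push_neg at hcpos
            simp only [hv, if_pos hdv, if_neg (by omega : ¬ c ≤ 0)] at hvc
            exact hba hvc
          have hdv2 : s ∣ s + c := dvd_add (dvd_refl s) hdv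
          have hc2 : ¬ (s + c ≤ 0) := by
            intro hle
            simp only [hv, if_pos hdv2, if_pos hle] at hvcs
            exact hba hvcs.symm
          obtain ⟨q, hq⟩ := hdv
          have hq0 : q ≤ 0 := by nlinarith
          have hqm : -1 < q := by nlinarith
          have hq00 : q = 0 := by omega
          rw [hq00, mul_zero] at hq
          exact hq
        · exfalso
          have hdv2 : ¬ s ∣ s + c := fun h => hdv (by
            have := dvd_sub h (dvd_refl s)
            simpa using this)
          simp only [hv, if_neg hdv] at hvc
          simp only [hv, if_neg hdv2] at hvcs
          have : (s + c) % s = c % s := by rw [add_comm]; exact hmod_add c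
          rw [this, hvc] at hvcs
          exact hba hvcs.symm
      subst hc0
      rw [hob v 0 hoc, zero_add, hvs]
    · rw [hnb v c hoc]
      have hc0 : c ≠ 0 := fun h => hoc (h ▸ hocc_v0)
      by_cases hdv : s ∣ c
      · have hdv2 : s ∣ c + s := dvd_add hdv (dvd_refl s)
        simp only [hv, if_pos hdv, if_pos hdv2]
        obtain ⟨q, hq⟩ := hdv
        rcases le_or_gt c 0 with hc1 | hc1
        · have hq0 : q ≤ 0 := by nlinarith
          have hqne : q ≠ 0 := by
            intro h
            subst h
            simp at hq
            exact hc0 hq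
          have hcs : c + s ≤ 0 := by
            have : q ≤ -1 := by omega
            nlinarith
          rw [if_pos hc1, if_pos hcs]
        · have hcs : ¬ (c + s ≤ 0) := by omega
          rw [if_neg (by omega), if_neg hcs]
      · have hdv2 : ¬ s ∣ c + s := fun h => hdv (by
          have := dvd_sub h (dvd_refl s)
          simpa using this)
        simp only [hv, if_neg hdv, if_neg hdv2, hmod_add c]
  have hx_noocc : ∀ c, ¬ CAOcc P k ℓ x c := by
    intro c hoc
    have h1 : x c = a := by
      have := hoc 0 hk hl
      rwa [zero_add, hP0] at this
    have h2 : x (s + c) = b := by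
      have := hoc s hks hsl
      rwa [hPs] at this
    have h3 : x (s + c) = x c := by
      simp only [hx]
      rw [add_comm s c, hmod_add c]
    rw [h3, h1] at h2
    exact hba h2.symm
  have hx_fix : τ x = x := by
    funext c
    exact hnb x c (hx_noocc c)
  have hx_iter : ∀ n : ℕ, τ^[n] x = x := fun n => Function.iterate_fixed hx_fix n
  have hv_iter : ∀ n : ℕ, τ^[n] v = fun i => v (i + (n : ℤ) * s) := by
    intro n
    induction n with
    | zero => funext i; simp
    | succ n ih =>
      rw [Function.iterate_succ_apply, hv_shift, CA_iter_shift hob hnb n s v, ih]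
      funext i
      have : i + s + (n : ℤ) * s = i + ((n : ℤ) + 1) * s := by ring
      simp only [this]
      push_cast
      ring_nf
  -- conclusion: x is not an equicontinuity point
  refine ⟨x, ?_⟩
  intro heq
  obtain ⟨κ, hκpos, hκ⟩ := heq 1 one_pos
  set y : ℤ → A := fun i => v (i + (-((κ : ℤ) * s))) with hy
  have hagree : ∀ i : ℤ, -(κ : ℤ) ≤ i → i ≤ (κ : ℤ) → y i = x i := by
    intro i h1 h2
    have hκs : (κ : ℤ) ≤ (κ : ℤ) * s := le_mul_of_one_le_right (by positivity) hs
    have hc0 : i + (-((κ : ℤ) * s)) ≤ 0 := by omega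
    by_cases hdv : s ∣ i + (-((κ : ℤ) * s))
    · have hdvi : s ∣ i := by
        have h' : s ∣ ((κ : ℤ) * s) := dvd_mul_left s κ
        have := dvd_add hdv h'
        simpa using this
      simp only [hy, hv, if_pos hdv, if_pos hc0, hx]
      rw [hdvd_mod i hdvi, hP0]
    · simp only [hy, hv, if_neg hdv, hx]
      congr 1
      have h' : i + (-((κ : ℤ) * s)) = i + s * (-(κ:ℤ)) := by ring
      rw [h', Int.add_mul_emod_self_left]
  have hyiter : τ^[κ + 1] y 0 = b := by
    have h1 : τ^[κ + 1] y = fun i => (τ^[κ+1] v) (i + (-((κ : ℤ) * s))) :=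
      CA_iter_shift hob hnb (κ+1) _ v
    rw [h1, hv_iter (κ+1)]
    simp only []
    have harg : (0 : ℤ) + (-((κ : ℤ) * s)) + ((κ:ℕ) + 1 : ℕ) * s = s := by
      push_cast
      ring
    rw [harg, hvs]
  have hxiter : τ^[κ + 1] x 0 = a := by rw [hx_iter, hx0]
  have hne : (τ^[κ+1] y) 0 ≠ (τ^[κ+1] x) 0 := by
    rw [hyiter, hxiter]
    exact hba
  have hd1 := CA_shiftDist_eq_one hne
  have := hκ y hagree (κ + 1)
  rw [hd1] at this
  exact lt_irrefl 1 this

end Core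

section Mirror

variable {A : Type*} {a b : A} {P : ℤ → A} {k ℓ : ℤ} {τ : (ℤ → A) → ℤ → A}

lemma CA_mirror_dist (u w : ℤ → A) :
    shiftDist (fun i => u (-i)) (fun i => w (-i)) = shiftDist u w := by
  unfold shiftDist
  have hiff : (fun i => u (-i)) = (fun i => w (-i)) ↔ u = w := by
    constructor
    · intro h
      funext i
      have := congrFun h (-i)
      simpa using this
    · intro h; rw [h]
  by_cases he : u = w
  · rw [if_pos (hiff.mpr he), if_pos he]
  · rw [if_neg (fun h => he (hiff.mp h)), if_neg he]
    have hset : {n : ℕ | ∀ i : ℤ, -(n:ℤ) ≤ i → i ≤ (n:ℤ) →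
        (fun i => u (-i)) i = (fun i => w (-i)) i}
        = {n : ℕ | ∀ i : ℤ, -(n:ℤ) ≤ i → i ≤ (n:ℤ) → u i = w i} := by
      ext n
      simp only [Set.mem_setOf_eq]
      constructor
      · intro h i h1 h2
        have := h (-i) (by omega) (by omega)
        simpa using this
      · intro h i h1 h2
        exact h (-i) (by omega) (by omega)
    rw [hset]

lemma CA_core_neg (hba : b ≠ a) (hk : k ≤ 0) (hl : 0 ≤ ℓ) (hP0 : P 0 = a)
    (hob : ∀ x j, CAOcc P k ℓ x j → τ x j = b)
    (hnb : ∀ x j, ¬ CAOcc P k ℓ x j → τ x j = x j)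
    (s : ℤ) (hs : s < 0) (hks : k ≤ s) (hPs : P s = b)
    (hwave : ∀ j, k ≤ j → j ≤ ℓ → k ≤ j + s → j + s ≤ ℓ → j ≠ 0 → P j = P (j + s)) :
    ∃ x : ℤ → A, ¬ IsEquicontinuityPoint τ x := by
  set τ' : (ℤ → A) → ℤ → A := fun x j => τ (fun i => x (-i)) (-j) with hτ'
  have hOcc' : ∀ (x : ℤ → A) (j : ℤ),
      CAOcc (fun i => P (-i)) (-ℓ) (-k) x j ↔ CAOcc P k ℓ (fun i => x (-i)) (-j) := by
    intro x j
    constructor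
    · intro h i h1 h2
      have h' := h (-i) (by omega) (by omega)
      simp only [neg_neg] at h'
      show x (-(i + -j)) = P i
      rw [show -(i + -j) = -i + j by ring]
      exact h'
    · intro h i h1 h2
      have h' := h (-i) (by omega) (by omega)
      show x (i + j) = P (-i)
      have : (fun i' => x (-i')) (-i + -j) = x (i + j) := by
        show x (-(-i + -j)) = x (i + j)
        rw [show -(-i + -j) = i + j by ring]
      rw [this] at h'
      exact h'
  have hob' : ∀ x j, CAOcc (fun i => P (-i)) (-ℓ) (-k) x j → τ' x j = b :=
    fun x j h => hob _ _ ((hOcc' x j).mp h)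
  have hnb' : ∀ x j, ¬ CAOcc (fun i => P (-i)) (-ℓ) (-k) x j → τ' x j = x j := by
    intro x j h
    have := hnb (fun i => x (-i)) (-j) (fun hh => h ((hOcc' x j).mpr hh))
    simpa using this
  have hwave' : ∀ j, -ℓ ≤ j → j ≤ -k → -ℓ ≤ j + -s → j + -s ≤ -k → j ≠ 0 →
      (fun i => P (-i)) j = (fun i => P (-i)) (j + -s) := by
    intro j h1 h2 h3 h4 h0
    have hw := hwave (-j) (by omega) (by omega) (by omega) (by omega) (by omega)
    show P (-j) = P (-(j + -s))
    rw [show -(j + -s) = -j + s by ring]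
    exact hw
  have hcore := CA_core_pos (τ := τ') hba (by omega : -ℓ ≤ 0) (by omega : (0:ℤ) ≤ -k)
    (by simpa using hP0) hob' hnb' (-s) (by omega) (by omega : -s ≤ -k)
    (by simpa using hPs) hwave'
  obtain ⟨x', hx'⟩ := hcore
  refine ⟨fun i => x' (-i), ?_⟩
  intro heq
  apply hx'
  have hiter : ∀ (n : ℕ) (y : ℤ → A),
      τ'^[n] y = fun i => (τ^[n] (fun i' => y (-i'))) (-i) := by
    intro n
    induction n with
    | zero => intro y; funext i; simp
    | succ n ih =>
      intro y
      rw [Function.iterate_succ_apply, Function.iterate_succ_apply, ih (τ' y)]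
      have harg : (fun i' => τ' y (-i')) = τ (fun i' => y (-i')) := by
        funext j
        show τ (fun i => y (-i)) (- -j) = τ (fun i' => y (-i')) j
        rw [neg_neg]
      rw [harg]
  intro ε hε
  obtain ⟨κ, hκ, hh⟩ := heq ε hε
  refine ⟨κ, hκ, ?_⟩
  intro y hy n
  have h1 : shiftDist (τ'^[n] y) (τ'^[n] x')
      = shiftDist (τ^[n] (fun i => y (-i))) (τ^[n] (fun i => x' (-i))) := by
    rw [hiter n y, hiter n x', CA_mirror_dist]
  rw [h1]
  exact hh (fun i => y (-i)) (fun i h1' h2' => hy (-i) (by omega) (by omega)) n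

/-- From the extracted wave parameter: a non-equicontinuity point exists. -/
lemma CA_noneq (hba : b ≠ a) (hk : k ≤ 0) (hl : 0 ≤ ℓ) (hP0 : P 0 = a)
    (hob : ∀ x j, CAOcc P k ℓ x j → τ x j = b)
    (hnb : ∀ x j, ¬ CAOcc P k ℓ x j → τ x j = x j)
    (s : ℤ) (hsk : k ≤ s) (hsl : s ≤ ℓ) (hs0 : s ≠ 0) (hPs : P s = b)
    (hwave : ∀ j, k ≤ j → j ≤ ℓ → k ≤ j + s → j + s ≤ ℓ → j ≠ 0 → P j = P (j + s)) :
    ∃ x : ℤ → A, ¬ IsEquicontinuityPoint τ x := by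
  rcases lt_or_gt_of_ne hs0 with h | h
  · exact CA_core_neg hba hk hl hP0 hob hnb s h hsk hPs hwave
  · exact CA_core_pos hba hk hl hP0 hob hnb s h hsl hPs hwave

end Mirror

/-- For a CA `τ` with unique active transition `p : S → A`, with `A`
finite with at least two elements and `S` an integer interval containing `0`:
`τ` is not idempotent iff `τ` is strictly almost equicontinuous. -/
theorem not_idempotent_iff_strictly_almost_equicontinuous
    {A : Type*} [Finite A] [Nontrivial A]
    (k ℓ : ℤ) (hk : k ≤ 0) (hℓ : 0 ≤ ℓ)
    (S : Finset ℤ) (hS : S = Finset.Icc k ℓ) (h0 : (0 : ℤ) ∈ S)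
    (p : S → A) (μ : (S → A) → A)
    (hμ : ∀ z : S → A, μ z = z ⟨0, h0⟩ ↔ z ≠ p)
    (τ : (ℤ → A) → ℤ → A)
    (hτ : ∀ (x : ℤ → A) (j : ℤ), τ x j = μ (fun s : S => x (s.1 + j))) :
    τ ∘ τ ≠ τ ↔
      ((∀ x : ℤ → A, ∀ ε : ℝ, 0 < ε →
          ∃ y : ℤ → A, IsEquicontinuityPoint τ y ∧ shiftDist x y < ε) ∧
       ¬ (∀ x : ℤ → A, IsEquicontinuityPoint τ x)) := by
  classical
  set a : A := p ⟨0, h0⟩ with ha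
  set b : A := μ p with hbdef
  set P : ℤ → A := fun i => if h : i ∈ S then p ⟨i, h⟩ else p ⟨0, h0⟩ with hPdef
  have hmem : ∀ i : ℤ, i ∈ S ↔ (k ≤ i ∧ i ≤ ℓ) := by
    intro i
    rw [hS, Finset.mem_Icc]
  have hP0 : P 0 = a := by
    rw [hPdef]
    simp only [dif_pos h0]
    rfl
  have hba : b ≠ a := fun h => ((hμ p).mp h) rfl
  have hwin : ∀ (x : ℤ → A) (j : ℤ),
      ((fun s : S => x (s.1 + j)) = p) ↔ CAOcc P k ℓ x j := by
    intro x j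
    constructor
    · intro h i h1 h2
      have hiS : i ∈ S := (hmem i).mpr ⟨h1, h2⟩
      have := congrFun h ⟨i, hiS⟩
      simp only [] at this
      rw [hPdef]
      simp only [dif_pos hiS]
      exact this
    · intro h
      funext sᵢ
      obtain ⟨i, hiS⟩ := sᵢ
      obtain ⟨h1, h2⟩ := (hmem i).mp hiS
      have := h i h1 h2
      rw [hPdef] at this
      simp only [dif_pos hiS] at this
      exact this
  have hob : ∀ x j, CAOcc P k ℓ x j → τ x j = b := by
    intro x j h
    rw [hτ, (hwin x j).mpr h]
  have hnb : ∀ x j, ¬ CAOcc P k ℓ x j → τ x j = x j := by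
    intro x j h
    rw [hτ]
    have hne : (fun s : S => x (s.1 + j)) ≠ p := fun hh => h ((hwin x j).mp hh)
    rw [(hμ _).mpr hne]
    show x ((0:ℤ) + j) = x j
    rw [zero_add]
  constructor
  · intro hne
    constructor
    · obtain ⟨c, hc⟩ := exists_ne a
      exact CA_dense hk hℓ hP0 hob hnb c hc
    · obtain ⟨x0, hx0⟩ := Function.ne_iff.mp hne
      obtain ⟨j0, hj0⟩ := Function.ne_iff.mp hx0
      have hocc : CAOcc P k ℓ (τ x0) j0 := by
        by_contra h
        exact hj0 (hnb (τ x0) j0 h)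
      have hz : ∀ i, k ≤ i → i ≤ ℓ → τ (fun i' => x0 (i' + j0)) i = P i := by
        intro i h1 h2
        rw [CA_tau_shift hob hnb j0 x0]
        exact hocc i h1 h2
      obtain ⟨s, ⟨hsk, hsl⟩, hs0, hPs, hwave⟩ :=
        CA_extract hba hk hℓ hP0 hob hnb (fun i' => x0 (i' + j0)) hz
      obtain ⟨x, hx⟩ := CA_noneq hba hk hℓ hP0 hob hnb s hsk hsl hs0 hPs hwave
      exact fun hall => hx (hall x)
  · rintro ⟨-, hna⟩ hidem
    exact hna (CA_all_eq_of_idem hk hℓ hob hnb hidem)
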